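/- Suppose Q : ℝⁿ → Matrix (Fin m) (Fin m) ℝ is a conservative Q-matrix field admitting a family of invariant distributions μ^x and uniformly exponentially ergodic with constants C₀, λ. Then there is a constant C > 0, depending only on C₀ and λ, such that for all x, y ∈ ℝⁿ and every i ∈ Fin m: sup over t ≥ 0 of Σⱼ |p^x_{ij}(t) − p^y_{ij}(t)| ≤ C · ‖Q(x) − Q(y)‖_ℓ. -/

import Mathlib

open MeasureTheory

noncomputable section
set_option maxHeartbeats 1000000

/-- ℓ-norm of a matrix: `‖M‖_ℓ = max_i Σⱼ |M i j|`. -/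
def lnorm {m : ℕ} (M : Matrix (Fin m) (Fin m) ℝ) : ℝ := ⨆ i, ∑ j, |M i j|

section Aux

open NormedSpace

attribute [local instance] Matrix.linftyOpSemiNormedRing Matrix.linftyOpNormedRing
  Matrix.linftyOpNormedAlgebra

variable {m : ℕ}

lemma row_sum_le_norm (M : Matrix (Fin m) (Fin m) ℝ) (i : Fin m) :
    ∑ j, |M i j| ≤ ‖M‖ := by
  rw [Matrix.linfty_opNorm_def]
  have h : (∑ j, ‖M i j‖₊) ≤ Finset.univ.sup (fun i => ∑ j, ‖M i j‖₊) :=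
    Finset.le_sup (f := fun i => ∑ j, ‖M i j‖₊) (Finset.mem_univ i)
  calc ∑ j, |M i j| = ((∑ j, ‖M i j‖₊ : NNReal) : ℝ) := by
        push_cast; simp [Real.norm_eq_abs]
    _ ≤ _ := NNReal.coe_le_coe.mpr h

lemma norm_le_row_sums (M : Matrix (Fin m) (Fin m) ℝ) (c : ℝ) (hc : 0 ≤ c)
    (h : ∀ i, ∑ j, |M i j| ≤ c) : ‖M‖ ≤ c := by
  rw [Matrix.linfty_opNorm_def]
  have : Finset.univ.sup (fun i => ∑ j, ‖M i j‖₊) ≤ c.toNNReal := by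
    refine Finset.sup_le fun i _ => ?_
    rw [← NNReal.coe_le_coe]
    calc ((∑ j, ‖M i j‖₊ : NNReal) : ℝ) = ∑ j, |M i j| := by
          push_cast; simp [Real.norm_eq_abs]
      _ ≤ c := h i
      _ = (c.toNNReal : ℝ) := (Real.coe_toNNReal c hc).symm
  calc ((Finset.univ.sup (fun i => ∑ j, ‖M i j‖₊) : NNReal) : ℝ)
      ≤ (c.toNNReal : ℝ) := NNReal.coe_le_coe.mpr this
    _ = c := Real.coe_toNNReal c hc

lemma lnorm_eq_norm [Nonempty (Fin m)] (M : Matrix (Fin m) (Fin m) ℝ) :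
    lnorm M = ‖M‖ := by
  have hle : ∀ i, ∑ j, |M i j| ≤ lnorm M := fun i =>
    le_ciSup (f := fun i => ∑ j, |M i j|) (Set.Finite.bddAbove (Set.finite_range _)) i
  have h1 : lnorm M ≤ ‖M‖ := ciSup_le fun i => row_sum_le_norm M i
  have h0 : 0 ≤ lnorm M := by
    obtain ⟨i⟩ := ‹Nonempty (Fin m)›
    exact le_trans (Finset.sum_nonneg fun j _ => abs_nonneg _) (hle i)
  have h2 : ‖M‖ ≤ lnorm M := norm_le_row_sums M _ h0 hle
  linarith

lemma key_estimate (C₀ lam : ℝ) (hC₀ : 0 < C₀) (hlam : 0 < lam)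
    (A B : Matrix (Fin m) (Fin m) ℝ) (μA μB : Fin m → ℝ)
    (hA0 : ∀ i, ∑ j, A i j = 0) (hB0 : ∀ i, ∑ j, B i j = 0)
    (hμA : ∀ i, 0 ≤ μA i) (hμA1 : ∑ i, μA i = 1)
    (hergA : ∀ i (s : ℝ), 0 ≤ s → ∑ j, |exp (s • A) i j - μA j| ≤ C₀ * Real.exp (-lam * s))
    (hergB : ∀ i (s : ℝ), 0 ≤ s → ∑ j, |exp (s • B) i j - μB j| ≤ C₀ * Real.exp (-lam * s))
    (t : ℝ) (ht : 0 ≤ t) :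
    ‖exp (t • A) - exp (t • B)‖ ≤ ((1 + C₀) * C₀ / lam) * ‖A - B‖ := by
  classical
  set Δ : Matrix (Fin m) (Fin m) ℝ := A - B with hΔ
  set Px : Matrix (Fin m) (Fin m) ℝ := Matrix.of (fun _ j => μA j) with hPx
  set Py : Matrix (Fin m) (Fin m) ℝ := Matrix.of (fun _ j => μB j) with hPy
  have hDP : Δ * Py = 0 := by
    ext i j
    simp only [Matrix.mul_apply, Matrix.zero_apply, hΔ, Matrix.sub_apply, hPy, Matrix.of_apply]
    rw [← Finset.sum_mul, Finset.sum_sub_distrib, hA0 i, hB0 i]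
    ring
  -- norm bounds
  have hexpAsub : ∀ s : ℝ, 0 ≤ s → ‖exp (s • A) - Px‖ ≤ C₀ * Real.exp (-lam * s) := by
    intro s hs
    refine norm_le_row_sums _ _ (by positivity) fun i => ?_
    simpa [Matrix.sub_apply, hPx] using hergA i s hs
  have hPxnorm : ‖Px‖ ≤ 1 := by
    refine norm_le_row_sums _ _ one_pos.le fun i => ?_
    simp only [hPx, Matrix.of_apply]
    rw [Finset.sum_congr rfl fun j _ => abs_of_nonneg (hμA j)]
    exact hμA1.le
  have hexpA : ∀ s : ℝ, 0 ≤ s → ‖exp (s • A)‖ ≤ 1 + C₀ := by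
    intro s hs
    have h1 : ‖exp (s • A)‖ ≤ ‖exp (s • A) - Px‖ + ‖Px‖ := by
      simpa using norm_add_le (exp (s • A) - Px) Px
    have h2 : Real.exp (-lam * s) ≤ 1 := by
      rw [← Real.exp_zero]
      exact Real.exp_le_exp.mpr (by nlinarith)
    nlinarith [hexpAsub s hs]
  have hexpBsub : ∀ s : ℝ, 0 ≤ s → ‖exp (s • B) - Py‖ ≤ C₀ * Real.exp (-lam * s) := by
    intro s hs
    refine norm_le_row_sums _ _ (by positivity) fun i => ?_
    simpa [Matrix.sub_apply, hPy] using hergB i s hs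
  -- Duhamel
  set f' : ℝ → Matrix (Fin m) (Fin m) ℝ :=
    fun s => exp (s • A) * Δ * exp ((t - s) • B) with hf'
  have hderiv : ∀ s : ℝ,
      HasDerivAt (fun u : ℝ => exp (u • A) * exp ((t - u) • B)) (f' s) s := by
    intro s
    have h1 : HasDerivAt (fun u : ℝ => exp (u • A)) (exp (s • A) * A) s :=
      hasDerivAt_exp_smul_const A s
    have hb : HasDerivAt (fun u : ℝ => exp (u • B)) (B * exp ((t - s) • B)) (t - s) :=
      hasDerivAt_exp_smul_const' B (t - s)
    have hg : HasDerivAt (fun u : ℝ => t - u) (-1) s := (hasDerivAt_id s).const_sub t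
    have h2 : HasDerivAt (fun u : ℝ => exp ((t - u) • B))
        ((-1 : ℝ) • (B * exp ((t - s) • B))) s := hb.scomp s hg
    have h3 : HasDerivAt (fun u : ℝ => exp (u • A) * exp ((t - u) • B))
        (exp (s • A) * A * exp ((t - s) • B) + exp (s • A) * ((-1 : ℝ) • (B * exp ((t - s) • B)))) s :=
      h1.mul h2
    convert h3 using 1
    simp only [hf', hΔ, neg_one_smul, mul_neg, mul_sub, sub_mul]
    noncomm_ring
  have hcont : Continuous f' := by
    have hca : Continuous (fun u : ℝ => exp (u • A)) :=
      exp_continuous.comp (continuous_id.smul continuous_const)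
    have hcb : Continuous (fun u : ℝ => exp ((t - u) • B)) :=
      exp_continuous.comp ((continuous_const.sub continuous_id).smul continuous_const)
    exact (hca.mul continuous_const).mul hcb
  have hint : ∫ s in (0:ℝ)..t, f' s = exp (t • A) - exp (t • B) := by
    rw [intervalIntegral.integral_eq_sub_of_hasDerivAt (fun s _ => hderiv s)
      (hcont.intervalIntegrable 0 t)]
    simp [sub_self, zero_smul, exp_zero]
  -- pointwise bound
  have hb : ∀ s ∈ Set.Icc (0:ℝ) t,
      ‖f' s‖ ≤ (1 + C₀) * ‖Δ‖ * C₀ * Real.exp (-lam * (t - s)) := by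
    intro s hs
    have hrw : f' s = exp (s • A) * Δ * (exp ((t - s) • B) - Py) := by
      rw [mul_sub, mul_assoc (exp (s • A)) Δ Py, hDP, mul_zero, sub_zero]
    rw [hrw]
    calc ‖exp (s • A) * Δ * (exp ((t - s) • B) - Py)‖
        ≤ ‖exp (s • A)‖ * ‖Δ‖ * ‖exp ((t - s) • B) - Py‖ := by
          refine (norm_mul_le _ _).trans ?_
          gcongr
          exact norm_mul_le _ _
      _ ≤ (1 + C₀) * ‖Δ‖ * (C₀ * Real.exp (-lam * (t - s))) := by
          have hA' := hexpA s hs.1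
          have hB' := hexpBsub (t - s) (by linarith [hs.2])
          exact mul_le_mul (mul_le_mul hA' le_rfl (norm_nonneg _) (by positivity)) hB'
            (norm_nonneg _) (by positivity)
      _ = (1 + C₀) * ‖Δ‖ * C₀ * Real.exp (-lam * (t - s)) := by ring
  -- integral of the bound
  have hIderiv : ∀ s : ℝ,
      HasDerivAt (fun u : ℝ => Real.exp (-lam * (t - u)) / lam) (Real.exp (-lam * (t - s))) s := by
    intro s
    have h1 : HasDerivAt (fun u : ℝ => -lam * (t - u)) lam s := by
      have := ((hasDerivAt_id s).const_sub t).const_mul (-lam)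
      simpa using this
    have h2 := (h1.exp).div_const lam
    have : Real.exp (-lam * (t - s)) * lam / lam = Real.exp (-lam * (t - s)) := by
      field_simp
    rwa [this] at h2
  have hI : ∫ s in (0:ℝ)..t, Real.exp (-lam * (t - s))
      = (1 - Real.exp (-lam * t)) / lam := by
    rw [intervalIntegral.integral_eq_sub_of_hasDerivAt (fun s _ => hIderiv s)
      (Continuous.intervalIntegrable (by continuity) 0 t)]
    rw [sub_self, mul_zero, Real.exp_zero, sub_zero]
    ring
  have hΔnn : (0:ℝ) ≤ ‖Δ‖ := norm_nonneg _
  calc ‖exp (t • A) - exp (t • B)‖ = ‖∫ s in (0:ℝ)..t, f' s‖ := by rw [hint]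
    _ ≤ ∫ s in (0:ℝ)..t, ‖f' s‖ := intervalIntegral.norm_integral_le_integral_norm ht
    _ ≤ ∫ s in (0:ℝ)..t, (1 + C₀) * ‖Δ‖ * C₀ * Real.exp (-lam * (t - s)) := by
        refine intervalIntegral.integral_mono_on ht (hcont.norm.intervalIntegrable 0 t)
          (Continuous.intervalIntegrable (by continuity) 0 t) hb
    _ = (1 + C₀) * ‖Δ‖ * C₀ * ((1 - Real.exp (-lam * t)) / lam) := by
        rw [intervalIntegral.integral_const_mul, hI]
    _ ≤ ((1 + C₀) * C₀ / lam) * ‖Δ‖ := by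
        have hexp : 0 ≤ Real.exp (-lam * t) := (Real.exp_pos _).le
        have hle : (1 - Real.exp (-lam * t)) / lam ≤ 1 / lam :=
          (div_le_div_iff_of_pos_right hlam).mpr (by linarith)
        calc (1 + C₀) * ‖Δ‖ * C₀ * ((1 - Real.exp (-lam * t)) / lam)
            ≤ (1 + C₀) * ‖Δ‖ * C₀ * (1 / lam) := by
              apply mul_le_mul_of_nonneg_left hle (by positivity)
          _ = ((1 + C₀) * C₀ / lam) * ‖Δ‖ := by ring


/-- Uniform-in-time Lipschitz estimate of the transition semigroup with respect to
the parameter: `sup_{t ≥ 0} Σⱼ |p^x_{ij}(t) − p^y_{ij}(t)| ≤ C‖Q(x) − Q(y)‖_ℓ`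
with `C = C(C₀, λ)`. -/
theorem semigroup_totalVariation_lipschitz (C₀ lam : ℝ) (hC₀ : 0 < C₀) (hlam : 0 < lam) :
    ∃ C > 0, ∀ (n m : ℕ) (Q : EuclideanSpace ℝ (Fin n) → Matrix (Fin m) (Fin m) ℝ)
      (μ : EuclideanSpace ℝ (Fin n) → Fin m → ℝ),
      (∀ x i j, i ≠ j → 0 ≤ Q x i j) →
      (∀ x i, ∑ j, Q x i j = 0) →
      (∀ x i, 0 < μ x i) →
      (∀ x, ∑ i, μ x i = 1) →
      (∀ x j, ∑ i, μ x i * Q x i j = 0) →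
      (∀ x i (t : ℝ), 0 ≤ t →
        ∑ j, |NormedSpace.exp (t • Q x) i j - μ x j| ≤ C₀ * Real.exp (-lam * t)) →
      ∀ (x y : EuclideanSpace ℝ (Fin n)) (i : Fin m) (t : ℝ), 0 ≤ t →
        ∑ j, |NormedSpace.exp (t • Q x) i j - NormedSpace.exp (t • Q y) i j|
          ≤ C * lnorm (Q x - Q y) := by
  refine ⟨(1 + C₀) * C₀ / lam, by positivity, ?_⟩
  intro n m Q μ hoff hrow hμpos hμ1 hinv herg x y i t ht
  haveI : Nonempty (Fin m) := ⟨i⟩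
  have hkey := key_estimate C₀ lam hC₀ hlam (Q x) (Q y) (μ x) (μ y)
    (hrow x) (hrow y) (fun i => (hμpos x i).le) (hμ1 x)
    (fun i s hs => herg x i s hs) (fun i s hs => herg y i s hs) t ht
  have h1 : ∑ j, |NormedSpace.exp (t • Q x) i j - NormedSpace.exp (t • Q y) i j|
      ≤ ‖NormedSpace.exp (t • Q x) - NormedSpace.exp (t • Q y)‖ := by
    have := row_sum_le_norm (NormedSpace.exp (t • Q x) - NormedSpace.exp (t • Q y)) i
    simpa [Matrix.sub_apply] using this
  rw [lnorm_eq_norm]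
  exact h1.trans hkey

end Aux
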